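/- One-variable Jacobi residue formula: let f(x) ∈ ℂ((x)) be a nonzero Laurent series and b the integer such that f(x)/x^b is a power series with nonzero constant term. Then for any Laurent polynomial G(y), CT_x [G(f(x)) · (x/f(x)) · f'(x)] = b · CT_y G(y). -/

import Mathlib

/-- The auxiliary Laurent series whose `n`-th coefficient is `n · f_n`. -/
noncomputable def xMulDerivAux (f : LaurentSeries ℂ) : LaurentSeries ℂ :=
  ⟨fun n => (n : ℂ) * f.coeff n,
   f.isPWO_support'.mono (by
     intro n hn
     simp only [Function.mem_support] at hn ⊢
     intro h
     exact hn (by rw [h, mul_zero]))⟩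


lemma aux_coeff (f : LaurentSeries ℂ) (n : ℤ) :
    (xMulDerivAux f).coeff n = (n : ℂ) * f.coeff n := rfl

lemma aux_support (f : LaurentSeries ℂ) : (xMulDerivAux f).support ⊆ f.support := by
  intro n hn
  simp only [HahnSeries.mem_support, aux_coeff] at *
  exact fun h => hn (by rw [h, mul_zero])

lemma aux_mul (f g : LaurentSeries ℂ) :
    xMulDerivAux (f * g) = xMulDerivAux f * g + f * xMulDerivAux g := by
  ext n
  rw [HahnSeries.coeff_add, aux_coeff,
      HahnSeries.coeff_mul_left' f.isPWO_support (aux_support f),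
      HahnSeries.coeff_mul_right' g.isPWO_support (aux_support g),
      HahnSeries.coeff_mul, Finset.mul_sum, ← Finset.sum_add_distrib]
  apply Finset.sum_congr rfl
  intro ij hij
  rw [Finset.mem_addAntidiagonal] at hij
  rw [aux_coeff, aux_coeff, ← hij.2.2]
  push_cast
  ring

/-- The formal derivative on Laurent series: `(∑ aₙ xⁿ)' = ∑ n aₙ xⁿ⁻¹`. -/
noncomputable def xderiv (f : LaurentSeries ℂ) : LaurentSeries ℂ :=
  HahnSeries.single (-1 : ℤ) (1 : ℂ) * xMulDerivAux f

lemma xderiv_coeff (f : LaurentSeries ℂ) (n : ℤ) :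
    (xderiv f).coeff n = ((n + 1 : ℤ) : ℂ) * f.coeff (n + 1) := by
  rw [xderiv, show n = n + 1 + (-1) by ring, HahnSeries.coeff_single_mul_add, one_mul, aux_coeff]
  ring_nf

lemma xderiv_mul (f g : LaurentSeries ℂ) :
    xderiv (f * g) = xderiv f * g + f * xderiv g := by
  unfold xderiv
  rw [aux_mul, mul_add]
  ring

lemma xderiv_one : xderiv (1 : LaurentSeries ℂ) = 0 := by
  ext n
  rw [xderiv_coeff, HahnSeries.coeff_zero, HahnSeries.coeff_one]
  by_cases h : n + 1 = (0 : ℤ)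
  · rw [h]; simp
  · rw [if_neg h, mul_zero]

lemma res_xderiv (f : LaurentSeries ℂ) : (xderiv f).coeff (-1) = 0 := by
  rw [xderiv_coeff]; norm_num

lemma smul_eq_C_mul (a : ℂ) (f : LaurentSeries ℂ) : a • f = HahnSeries.C a * f := by
  ext n
  rw [HahnSeries.coeff_smul, HahnSeries.C_apply, HahnSeries.coeff_single_zero_mul, smul_eq_mul]

lemma xderiv_pow (f : LaurentSeries ℂ) (n : ℕ) :
    xderiv (f ^ (n + 1)) = HahnSeries.C ((n + 1 : ℕ) : ℂ) * (f ^ n * xderiv f) := by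
  induction n with
  | zero => simp
  | succ m ih =>
    rw [pow_succ, xderiv_mul, ih]
    push_cast [map_add, map_one]
    ring

lemma xderiv_inv (f : LaurentSeries ℂ) (hf : f ≠ 0) :
    xderiv f⁻¹ = -(f⁻¹ * f⁻¹ * xderiv f) := by
  have h : xderiv (f * f⁻¹) = 0 := by rw [mul_inv_cancel₀ hf, xderiv_one]
  rw [xderiv_mul] at h
  have h3 : f * xderiv f⁻¹ = -(xderiv f * f⁻¹) := by
    rw [eq_neg_iff_add_eq_zero, add_comm]; exact h
  calc xderiv f⁻¹ = f⁻¹ * (f * xderiv f⁻¹) := by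
        rw [← mul_assoc, inv_mul_cancel₀ hf, one_mul]
    _ = f⁻¹ * -(xderiv f * f⁻¹) := by rw [h3]
    _ = -(f⁻¹ * f⁻¹ * xderiv f) := by ring


set_option maxHeartbeats 1600000 in
lemma xderiv_zpow (f : LaurentSeries ℂ) (hf : f ≠ 0) (k : ℤ) :
    xderiv (f ^ k) = HahnSeries.C (k : ℂ) * (f ^ (k - 1) * xderiv f) := by
  cases k with
  | ofNat n =>
    cases n with
    | zero => simp [xderiv_one]
    | succ m =>
      rw [Int.ofNat_eq_coe, zpow_natCast, xderiv_pow,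
        show ((m + 1 : ℕ) : ℤ) - 1 = (m : ℤ) by push_cast; ring, zpow_natCast]
      push_cast
      ring
  | negSucc n =>
    have hpow : (f : LaurentSeries ℂ) ^ (n + 1) ≠ 0 := pow_ne_zero _ hf
    have hn : f ^ n ≠ 0 := pow_ne_zero _ hf
    have key : (f ^ (n + 1))⁻¹ * (f ^ (n + 1))⁻¹ * f ^ n = (f ^ (n + 2))⁻¹ := by
      rw [← mul_inv, show f ^ (n + 1) * f ^ (n + 1) = f ^ (n + 2) * f ^ n by ring, mul_inv,
        mul_assoc, inv_mul_cancel₀ hn, mul_one]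
    rw [zpow_negSucc, xderiv_inv _ hpow, xderiv_pow,
      show Int.negSucc n - 1 = -((n + 2 : ℕ) : ℤ) by simp [Int.negSucc_eq]; ring,
      zpow_neg, zpow_natCast,
      show (Int.negSucc n : ℂ) = -((n + 1 : ℕ) : ℂ) by push_cast; simp [Int.negSucc_eq]]
    rw [map_neg]
    calc -((f ^ (n + 1))⁻¹ * (f ^ (n + 1))⁻¹ * (HahnSeries.C ((n + 1 : ℕ) : ℂ) * (f ^ n * xderiv f)))
        = -(HahnSeries.C ((n + 1 : ℕ) : ℂ) *
            (((f ^ (n + 1))⁻¹ * (f ^ (n + 1))⁻¹ * f ^ n) * xderiv f)) := by ring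
      _ = -HahnSeries.C ((n + 1 : ℕ) : ℂ) * ((f ^ (n + 2))⁻¹ * xderiv f) := by rw [key]; ring

lemma res_pow_ne (f : LaurentSeries ℂ) (hf : f ≠ 0) (k : ℤ) (hk : k ≠ 0) :
    (f ^ (k - 1) * xderiv f).coeff (-1) = 0 := by
  have h := congrArg (fun g : LaurentSeries ℂ => g.coeff (-1)) (xderiv_zpow f hf k)
  simp only [res_xderiv, HahnSeries.C_apply, HahnSeries.coeff_single_zero_mul] at h
  have hk' : (k : ℂ) ≠ 0 := Int.cast_ne_zero.mpr hk
  exact (mul_eq_zero.mp h.symm).resolve_left hk'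

lemma coeff_neg_one_mul (a b : LaurentSeries ℂ) (ha : ∀ n < (0 : ℤ), a.coeff n = 0)
    (hb : ∀ n < (0 : ℤ), b.coeff n = 0) : (a * b).coeff (-1) = 0 := by
  rw [HahnSeries.coeff_mul]
  apply Finset.sum_eq_zero
  intro ij hij
  rw [Finset.mem_addAntidiagonal] at hij
  obtain ⟨h1, h2, h3⟩ := hij
  by_cases hi : ij.1 < 0
  · rw [ha _ hi, zero_mul]
  · rw [hb ij.2 (by omega), mul_zero]


open HahnSeries in
lemma xderiv_single (b : ℤ) :
    xderiv (single b (1 : ℂ)) = HahnSeries.C (b : ℂ) * single (b - 1) (1 : ℂ) := by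
  ext n
  rw [xderiv_coeff, C_apply, coeff_single_zero_mul, coeff_single, coeff_single]
  by_cases h : n + 1 = b
  · rw [if_pos h, if_pos (by omega), h]
  · rw [if_neg h, if_neg (by omega), mul_zero, mul_zero]

open HahnSeries in
lemma single_inv' (b : ℤ) : (single b (1 : ℂ) : LaurentSeries ℂ)⁻¹ = single (-b) (1 : ℂ) := by
  apply inv_eq_of_mul_eq_one_right
  rw [single_mul_single, add_neg_cancel, mul_one, single_zero_one]

open HahnSeries in
lemma res_zero (f : LaurentSeries ℂ) (hf : f ≠ 0) :
    (f⁻¹ * xderiv f).coeff (-1) = (f.order : ℂ) := by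
  set b := f.order with hb
  set u : LaurentSeries ℂ := (f.powerSeriesPart : LaurentSeries ℂ) with hu_def
  have hu0 : u.coeff 0 ≠ 0 := by
    have h1 : u.coeff ((0 : ℕ) : ℤ) = PowerSeries.coeff 0 f.powerSeriesPart :=
      LaurentSeries.coeff_coe_powerSeries _ _
    simp only [Nat.cast_zero, LaurentSeries.powerSeriesPart_coeff, add_zero] at h1
    rw [h1]
    exact mt coeff_order_eq_zero.mp hf
  have hu : u ≠ 0 := fun h => hu0 (by rw [h, HahnSeries.coeff_zero])
  have huneg : ∀ n < (0 : ℤ), u.coeff n = 0 := by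
    intro n hn
    rw [hu_def, PowerSeries.coeff_coe, if_pos hn]
  have hu_ord : u.order = 0 := by
    refine le_antisymm (order_le_of_coeff_ne_zero hu0) ?_
    by_contra h
    push_neg at h
    exact mt coeff_order_eq_zero.mp hu (huneg _ h)
  have hui : ∀ n < (0 : ℤ), (u⁻¹).coeff n = 0 := by
    have hord : (u⁻¹).order = 0 := by
      have h1 : (u⁻¹ * u).order = (u⁻¹).order + u.order :=
        order_mul (inv_ne_zero hu) hu
      rw [inv_mul_cancel₀ hu, order_one, hu_ord, add_zero] at h1
      exact h1.symm
    intro n hn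
    exact coeff_eq_zero_of_lt_order (by omega)
  have hxu : ∀ n < (0 : ℤ), (xderiv u).coeff n = 0 := by
    intro n hn
    rw [xderiv_coeff]
    by_cases h : n = -1
    · rw [h]; norm_num
    · rw [huneg (n + 1) (by omega), mul_zero]
  have hfd : f = single b 1 * u := (f.single_order_mul_powerSeriesPart).symm
  have hfin : f⁻¹ = single (-b) 1 * u⁻¹ := by
    rw [hfd, mul_inv, single_inv']
  have hxd : xderiv f = HahnSeries.C (b : ℂ) * single (b - 1) 1 * u + single b 1 * xderiv u := by
    rw [hfd, xderiv_mul, xderiv_single]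
  have hmain : f⁻¹ * xderiv f = single (-1) ((b : ℂ)) + u⁻¹ * xderiv u := by
    rw [hfin, hxd, mul_add]
    congr 1
    · rw [show single (-b) (1:ℂ) * u⁻¹ * (HahnSeries.C (b:ℂ) * single (b-1) 1 * u) =
          HahnSeries.C (b:ℂ) * (single (-b) (1:ℂ) * single (b-1) 1) * (u⁻¹ * u) by ring,
        inv_mul_cancel₀ hu, mul_one, single_mul_single, one_mul, C_apply, single_mul_single,
        mul_one, show (0 : ℤ) + (-b + (b - 1)) = -1 by omega]
    · rw [show single (-b) (1:ℂ) * u⁻¹ * (single b 1 * xderiv u) =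
          (single (-b) (1:ℂ) * single b 1) * (u⁻¹ * xderiv u) by ring,
        single_mul_single, neg_add_cancel, mul_one, single_zero_one, one_mul]
  rw [hmain, coeff_add, coeff_neg_one_mul _ _ hui hxu, add_zero, coeff_single_same]


/-- One-variable Jacobi residue formula: for a nonzero Laurent series `f` with
order `b` and a Laurent polynomial `G(y) = ∑ₖ cₖ yᵏ`,
`CT_x [G(f(x)) · (x/f(x)) · f'(x)] = b · CT_y G(y) = b · c₀`. -/
theorem stmt13 (f : LaurentSeries ℂ) (hf : f ≠ 0) (c : ℤ →₀ ℂ) :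
    ((∑ k ∈ c.support, c k • f ^ k) *
        ((HahnSeries.single (1 : ℤ) (1 : ℂ)) * f⁻¹) * xderiv f).coeff 0 =
      (f.order : ℂ) * c 0 := by
  have hrearr : (∑ k ∈ c.support, c k • f ^ k) * ((HahnSeries.single (1 : ℤ) (1 : ℂ)) * f⁻¹) *
      xderiv f = HahnSeries.single (1 : ℤ) (1 : ℂ) *
        ∑ k ∈ c.support, HahnSeries.C (c k) * (f ^ (k - 1) * xderiv f) := by
    calc (∑ k ∈ c.support, c k • f ^ k) * ((HahnSeries.single (1 : ℤ) (1 : ℂ)) * f⁻¹) * xderiv f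
        = HahnSeries.single (1 : ℤ) (1 : ℂ) *
          ∑ k ∈ c.support, HahnSeries.C (c k) * (f ^ k * f⁻¹ * xderiv f) := by
          simp only [smul_eq_C_mul, Finset.sum_mul, Finset.mul_sum]
          apply Finset.sum_congr rfl
          intro k _
          ring
      _ = _ := by
          congr 1
          apply Finset.sum_congr rfl
          intro k _
          rw [← zpow_sub_one₀ hf]
  rw [hrearr]
  have h0 : ((HahnSeries.single (1 : ℤ) (1 : ℂ) *
      ∑ k ∈ c.support, HahnSeries.C (c k) * (f ^ (k - 1) * xderiv f)).coeff ((-1) + 1) =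
      (∑ k ∈ c.support, HahnSeries.C (c k) * (f ^ (k - 1) * xderiv f)).coeff (-1)) := by
    rw [HahnSeries.coeff_single_mul_add, one_mul]
  rw [show (-1 : ℤ) + 1 = 0 by decide] at h0
  have hsum : (∑ k ∈ c.support, HahnSeries.C (c k) * (f ^ (k - 1) * xderiv f)).coeff (-1) =
      ∑ k ∈ c.support, (HahnSeries.C (c k) * (f ^ (k - 1) * xderiv f)).coeff (-1) :=
    map_sum (HahnSeries.coeff.addMonoidHom (-1 : ℤ))
      (fun k => HahnSeries.C (c k) * (f ^ (k - 1) * xderiv f)) c.support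
  rw [h0, hsum]
  calc ∑ k ∈ c.support, (HahnSeries.C (c k) * (f ^ (k - 1) * xderiv f)).coeff (-1)
      = ∑ k ∈ c.support, (if k = 0 then (f.order : ℂ) * c 0 else 0) := by
        apply Finset.sum_congr rfl
        intro k _
        rw [HahnSeries.C_apply, HahnSeries.coeff_single_zero_mul]
        by_cases hk : k = 0
        · subst hk
          rw [if_pos rfl, show (0 : ℤ) - 1 = -1 from rfl, zpow_neg_one, res_zero f hf, mul_comm]
        · rw [if_neg hk, res_pow_ne f hf k hk, mul_zero]
    _ = if (0 : ℤ) ∈ c.support then (f.order : ℂ) * c 0 else 0 := Finset.sum_ite_eq' _ _ _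
    _ = (f.order : ℂ) * c 0 := by
        by_cases h : (0 : ℤ) ∈ c.support
        · rw [if_pos h]
        · rw [if_neg h, Finsupp.notMem_support_iff.mp h, mul_zero]
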